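/- Let $R$ be an associative unital $\mathbb{Q}$-algebra, let $A \in R$, let $\gamma \in R$ be a central unit and $t \in R$ a central element, and let $(P_n)_{n \geq 1}$ be a sequence of elements of $R$. Define elements $H_n \in R$ for $n \geq 0$ by the formal power series identity $\sum_{n \geq 0} H_n z^n = \exp\big(\sum_{n \geq 1} P_n z^n / n\big)$ in $R[[z]]$ (so $H_0 = 1$), and set $H_{-1} = 0$. If $A (H_n - \gamma^{-1} H_{n-1}) = (\gamma^{-n} H_n - t\, \gamma^{-n+1} H_{n-1}) A$ for all $n \geq 0$, then $A P_n - \gamma^{-n} P_n A = A(\gamma^{-n} - t^n)$ for all $n \geq 1$. -/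

import Mathlib

open scoped BigOperators

set_option linter.unusedSectionVars false
set_option maxHeartbeats 1000000

/-- The exponential `exp(X) = ∑_{k ≥ 0} X^k / k!` of a formal power series `X` with zero
constant term, over a (possibly noncommutative) `ℚ`-algebra `R`. -/
noncomputable def expPS {R : Type*} [Ring R] [Algebra ℚ R] (X : PowerSeries R) :
    PowerSeries R :=
  PowerSeries.mk fun n =>
    ∑ k ∈ Finset.range (n + 1), (k.factorial : ℚ)⁻¹ • PowerSeries.coeff n (X ^ k)

namespace Stmt9

open PowerSeries Finset

variable {R : Type*} [Ring R] [Algebra ℚ R]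

lemma coeff_expPS (X : PowerSeries R) (n : ℕ) :
    coeff n (expPS X) = ∑ k ∈ range (n + 1), (k.factorial : ℚ)⁻¹ • coeff n (X ^ k) := by
  simp [expPS]

lemma coeff_pow_eq_zero {X : PowerSeries R} (hX : constantCoeff X = 0) :
    ∀ k n : ℕ, n < k → coeff n (X ^ k) = 0 := by
  intro k
  induction k with
  | zero => omega
  | succ k ih =>
    intro n hn
    rw [pow_succ', coeff_mul]
    refine Finset.sum_eq_zero fun p hp => ?_
    rw [Finset.HasAntidiagonal.mem_antidiagonal] at hp
    rcases Nat.eq_zero_or_pos p.1 with h1 | h1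
    · rw [h1, coeff_zero_eq_constantCoeff, hX, zero_mul]
    · rw [ih p.2 (by omega), mul_zero]

lemma expPS_zero : expPS (0 : PowerSeries R) = 1 := by
  ext n
  rw [coeff_expPS]
  rcases Nat.eq_zero_or_pos n with rfl | hn
  · simp
  · rw [Finset.sum_eq_single 0]
    · simp [coeff_one]
    · intro k _ hk
      rw [zero_pow hk, map_zero, smul_zero]
    · simp

lemma coeff_expPS_big {X : PowerSeries R} (hX : constantCoeff X = 0) {n m : ℕ}
    (h : n < m) :
    coeff n (expPS X) = ∑ k ∈ range m, (k.factorial : ℚ)⁻¹ • coeff n (X ^ k) := by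
  rw [coeff_expPS]
  refine Finset.sum_subset (by intro x hx; simp_all; omega) fun k hk hk' => ?_
  simp only [Finset.mem_range, not_lt] at hk'
  rw [coeff_pow_eq_zero hX k n (by omega), smul_zero]

lemma commute_coeff_pow {x : R} {X : PowerSeries R}
    (h : ∀ j, Commute x (coeff j X)) (k b : ℕ) :
    Commute x (coeff b (X ^ k)) := by
  induction k generalizing b with
  | zero =>
    rw [pow_zero, coeff_one]
    split <;> [exact Commute.one_right x; exact Commute.zero_right x]
  | succ k ih =>
    rw [pow_succ, coeff_mul]
    exact Commute.sum_right _ _ _ fun p _ => (ih p.1).mul_right (h p.2)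

/-- triangular sum reindexing -/
lemma tri_sum {M : Type*} [AddCommMonoid M] (n : ℕ) (f : ℕ × ℕ → M)
    (hf : ∀ p : ℕ × ℕ, n < p.1 + p.2 → f p = 0) :
    ∑ k ∈ range (n + 1), ∑ q ∈ antidiagonal k, f q
      = ∑ j ∈ range (n + 1), ∑ i ∈ range (n + 1), f (j, i) := by
  have h1 : ∑ k ∈ range (n + 1), ∑ q ∈ antidiagonal k, f q
      = ∑ x ∈ (range (n + 1)).sigma (fun _ : ℕ => (antidiagonal · : ℕ → Finset (ℕ × ℕ)) _), f x.2 :=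
    (Finset.sum_sigma (range (n+1)) (fun k => antidiagonal k) (fun x => f x.2)).symm
  have h2 : ∑ j ∈ range (n + 1), ∑ i ∈ range (n + 1), f (j, i)
      = ∑ p ∈ range (n + 1) ×ˢ range (n + 1), f p := by
    rw [Finset.sum_product]
  rw [h1, h2]
  rw [← Finset.sum_subset
      (Finset.filter_subset (fun p : ℕ × ℕ => p.1 + p.2 ≤ n) (range (n+1) ×ˢ range (n+1)))
      (fun p hp hp' => by
        refine hf p ?_
        simp only [Finset.mem_filter] at hp'
        push_neg at hp'
        by_contra hle
        exact absurd (hp' hp) (by omega))]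
  refine Finset.sum_nbij' (fun x => x.2) (fun p => ⟨p.1 + p.2, p⟩) ?_ ?_ ?_ ?_ ?_
  · intro x hx
    simp only [Finset.mem_sigma, Finset.mem_range, Finset.HasAntidiagonal.mem_antidiagonal] at hx
    simp only [Finset.mem_filter, Finset.mem_product, Finset.mem_range]
    omega
  · intro p hp
    simp only [Finset.mem_filter, Finset.mem_product, Finset.mem_range] at hp
    refine Finset.mem_sigma.mpr ⟨Finset.mem_range.mpr (by simp; omega), ?_⟩
    simp
  · intro x hx
    simp only [Finset.mem_sigma, Finset.mem_range, Finset.HasAntidiagonal.mem_antidiagonal] at hx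
    exact Sigma.ext (by simp [hx.2]) (by simp)
  · intro p hp; rfl
  · intro x hx; rfl

lemma expPS_add {X Y : PowerSeries R} (hX : constantCoeff X = 0) (hY : constantCoeff Y = 0)
    (hc : ∀ i j, Commute (coeff i Y) (coeff j X)) :
    expPS (X + Y) = expPS Y * expPS X := by
  have hcc : ∀ j i a b, Commute (coeff a (Y ^ j)) (coeff b (X ^ i)) := by
    intro j i a b
    refine commute_coeff_pow (fun b' => ?_) i b
    exact (commute_coeff_pow (fun a' => (hc a' b').symm) j a).symm
  have hxy : Commute X Y := by
    show X * Y = Y * X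
    ext n
    rw [coeff_mul, coeff_mul, ← Finset.Nat.sum_antidiagonal_swap]
    exact Finset.sum_congr rfl fun p _ => ((hc p.1 p.2).eq).symm
  ext n
  rw [coeff_expPS, coeff_mul]
  -- F j i
  set F : ℕ × ℕ → R := fun q =>
    ((q.1.factorial : ℚ)⁻¹ * (q.2.factorial : ℚ)⁻¹) •
      ∑ p ∈ antidiagonal n, coeff p.1 (Y ^ q.1) * coeff p.2 (X ^ q.2) with hF
  have hFzero : ∀ q : ℕ × ℕ, n < q.1 + q.2 → F q = 0 := by
    intro q hq
    rw [hF]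
    simp only
    rw [Finset.sum_eq_zero, smul_zero]
    intro p hp
    rw [Finset.HasAntidiagonal.mem_antidiagonal] at hp
    rcases Nat.lt_or_ge p.1 q.1 with h | h
    · rw [coeff_pow_eq_zero hY _ _ h, zero_mul]
    · rw [coeff_pow_eq_zero hX _ _ (by omega), mul_zero]
  have lhs_eq : ∑ k ∈ range (n + 1), (k.factorial : ℚ)⁻¹ • coeff n ((X + Y) ^ k)
      = ∑ k ∈ range (n + 1), ∑ q ∈ antidiagonal k, F (q.2, q.1) := by
    refine Finset.sum_congr rfl fun k _ => ?_
    rw [hxy.add_pow, map_sum]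
    rw [Finset.smul_sum, ← Finset.Nat.sum_antidiagonal_eq_sum_range_succ
      (fun m j => (k.factorial : ℚ)⁻¹ • coeff n (X ^ m * Y ^ j * (k.choose m : PowerSeries R)))]
    refine Finset.sum_congr rfl fun q hq => ?_
    rw [Finset.HasAntidiagonal.mem_antidiagonal] at hq
    have hcast : (↑(k.choose q.1) : PowerSeries R) = C ((k.choose q.1 : R)) :=
      (map_natCast C _).symm
    have hmulcast : ∀ (x : R) (c : ℕ), x * (c : R) = (c : ℚ) • x := by
      intro x c
      rw [← map_natCast (algebraMap ℚ R) c, ← Algebra.commutes, ← Algebra.smul_def]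
    rw [hcast, coeff_mul_C, hmulcast, smul_smul, coeff_mul,
      ← Finset.Nat.sum_antidiagonal_swap]
    have hscal : (k.factorial : ℚ)⁻¹ * (k.choose q.1 : ℚ)
        = (q.2.factorial : ℚ)⁻¹ * (q.1.factorial : ℚ)⁻¹ := by
      have h1 : q.1 ≤ k := by omega
      have h2 : k - q.1 = q.2 := by omega
      have := Nat.choose_mul_factorial_mul_factorial h1
      rw [h2] at this
      have hq' : ((k.choose q.1 : ℚ)) * (q.1.factorial : ℚ) * (q.2.factorial : ℚ)
          = (k.factorial : ℚ) := by exact_mod_cast congrArg (Nat.cast (R := ℚ)) this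
      field_simp
      linarith [hq']
    rw [hscal, hF]
    simp only
    congr 1
    refine Finset.sum_congr rfl fun p _ => ?_
    exact ((hcc q.2 q.1 p.1 p.2).eq).symm
  have rhs_eq : ∑ p ∈ antidiagonal n, coeff p.1 (expPS Y) * coeff p.2 (expPS X)
      = ∑ j ∈ range (n + 1), ∑ i ∈ range (n + 1), F (j, i) := by
    have step1 : ∑ p ∈ antidiagonal n, coeff p.1 (expPS Y) * coeff p.2 (expPS X)
        = ∑ p ∈ antidiagonal n, ∑ j ∈ range (n + 1), ∑ i ∈ range (n + 1),
            ((j.factorial : ℚ)⁻¹ * (i.factorial : ℚ)⁻¹) •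
              (coeff p.1 (Y ^ j) * coeff p.2 (X ^ i)) := by
      refine Finset.sum_congr rfl fun p hp => ?_
      rw [Finset.HasAntidiagonal.mem_antidiagonal] at hp
      rw [coeff_expPS_big hY (show p.1 < n + 1 by omega),
        coeff_expPS_big hX (show p.2 < n + 1 by omega), Finset.sum_mul_sum]
      refine Finset.sum_congr rfl fun j _ => Finset.sum_congr rfl fun i _ => ?_
      rw [smul_mul_assoc, mul_smul_comm, smul_smul]
    rw [step1, Finset.sum_comm]
    refine Finset.sum_congr rfl fun j _ => ?_
    rw [Finset.sum_comm, hF]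
    simp only
    refine Finset.sum_congr rfl fun i _ => ?_
    rw [Finset.smul_sum]
  rw [lhs_eq, rhs_eq, tri_sum n (fun q => F (q.2, q.1)) (fun p hp => hFzero _ (by omega))]
  exact Finset.sum_comm

section Resc
variable {R : Type*} [Ring R] [Algebra ℚ R]

/-- Rescaling `f(z) ↦ f(cz)` for `c` central. -/
noncomputable def resc (c : R) (f : PowerSeries R) : PowerSeries R :=
  PowerSeries.mk fun n => c ^ n * coeff n f

lemma coeff_resc (c : R) (f : PowerSeries R) (n : ℕ) :
    coeff n (resc c f) = c ^ n * coeff n f := by simp [resc]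

lemma resc_mul {c : R} (hc : ∀ x, Commute c x) (f g : PowerSeries R) :
    resc c (f * g) = resc c f * resc c g := by
  ext n
  rw [coeff_resc, coeff_mul, coeff_mul, Finset.mul_sum]
  refine Finset.sum_congr rfl fun p hp => ?_
  rw [Finset.HasAntidiagonal.mem_antidiagonal] at hp
  rw [coeff_resc, coeff_resc, ← hp, pow_add]
  have h := ((Commute.pow_left (hc (coeff p.1 f)) p.2).symm).eq
  calc c ^ p.1 * c ^ p.2 * (coeff p.1 f * coeff p.2 g)
      = c ^ p.1 * (c ^ p.2 * coeff p.1 f) * coeff p.2 g := by simp only [mul_assoc]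
    _ = c ^ p.1 * (coeff p.1 f * c ^ p.2) * coeff p.2 g := by rw [h]
    _ = c ^ p.1 * coeff p.1 f * (c ^ p.2 * coeff p.2 g) := by rw [mul_assoc, mul_assoc, mul_assoc]

lemma resc_pow {c : R} (hc : ∀ x, Commute c x) (f : PowerSeries R) (k : ℕ) :
    resc c (f ^ k) = resc c f ^ k := by
  induction k with
  | zero =>
    ext n
    simp only [pow_zero, coeff_resc, coeff_one]
    split <;> simp_all
  | succ k ih => rw [pow_succ, pow_succ, resc_mul hc, ih]

lemma resc_expPS {c : R} (hc : ∀ x, Commute c x) (f : PowerSeries R) :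
    resc c (expPS f) = expPS (resc c f) := by
  ext n
  rw [coeff_resc, coeff_expPS, coeff_expPS, Finset.mul_sum]
  refine Finset.sum_congr rfl fun k _ => ?_
  rw [← resc_pow hc, coeff_resc, mul_smul_comm]

end Resc

section MapQ
variable {R : Type*} [Ring R] [Algebra ℚ R]

lemma expPS_map (f : PowerSeries ℚ) :
    PowerSeries.map (algebraMap ℚ R) (expPS f) = expPS (PowerSeries.map (algebraMap ℚ R) f) := by
  ext n
  rw [PowerSeries.coeff_map, coeff_expPS, coeff_expPS, map_sum]
  refine Finset.sum_congr rfl fun k _ => ?_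
  rw [← map_pow, PowerSeries.coeff_map, smul_eq_mul, map_mul,
    ← Algebra.smul_def]

end MapQ

section QComp

/-- the series `∑_{n ≥ 1} z^n/n = -log(1-z)` over `ℚ`. -/
noncomputable def Lq : PowerSeries ℚ :=
  PowerSeries.mk fun n => if n = 0 then 0 else (n : ℚ)⁻¹

/-- the series `∑_{n ≥ 0} z^n = 1/(1-z)` over `ℚ`. -/
noncomputable def onesQ : PowerSeries ℚ := PowerSeries.mk fun _ => (1 : ℚ)

lemma constCoeff_Lq : constantCoeff Lq = 0 := by simp [Lq, ← coeff_zero_eq_constantCoeff]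

lemma coeff_zero_expPS {R : Type*} [Ring R] [Algebra ℚ R] (f : PowerSeries R) :
    coeff 0 (expPS f) = 1 := by
  rw [coeff_expPS]
  simp

lemma deriv_Lq : (PowerSeries.derivative ℚ) Lq = onesQ := by
  ext n
  rw [PowerSeries.coeff_derivative]
  simp only [Lq, onesQ, coeff_mk, if_false]
  rw [if_neg (Nat.succ_ne_zero n), show ((n:ℚ)+1) = ((n+1 : ℕ) : ℚ) by push_cast; ring,
    inv_mul_cancel₀ (by exact_mod_cast Nat.succ_ne_zero n)]

lemma expQ_rec (n : ℕ) :
    coeff (n + 1) (expPS Lq) * (n + 1) = ∑ p ∈ antidiagonal n, coeff p.1 (expPS Lq) := by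
  have hterm : ∀ k : ℕ, coeff (n + 1) (Lq ^ k) * ((n:ℚ) + 1)
      = (k : ℚ) * coeff n (Lq ^ (k - 1) * onesQ) := by
    intro k
    rw [← PowerSeries.coeff_derivative, Derivation.leibniz_pow, smul_eq_mul, deriv_Lq,
      map_nsmul, nsmul_eq_mul]
  rw [coeff_expPS, Finset.sum_mul]
  have step1 : ∑ k ∈ range (n + 1 + 1), ((k.factorial : ℚ)⁻¹ • coeff (n+1) (Lq ^ k)) * ((n:ℚ)+1)
      = ∑ k ∈ range (n + 2), (k.factorial : ℚ)⁻¹ • ((k : ℚ) * coeff n (Lq ^ (k - 1) * onesQ)) := by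
    refine Finset.sum_congr rfl fun k _ => ?_
    rw [smul_mul_assoc, hterm k]
  push_cast
  rw [step1, Finset.sum_range_succ']
  have hzero : (Nat.factorial 0 : ℚ)⁻¹ • ((0 : ℚ) * coeff n (Lq ^ (0 - 1) * onesQ)) = 0 := by
    simp
  simp only [Nat.cast_zero, zero_mul, smul_zero, add_zero] at hzero ⊢
  have step2 : ∀ j : ℕ, ((j+1).factorial : ℚ)⁻¹ • (((j+1 : ℕ) : ℚ) * coeff n (Lq ^ (j+1-1) * onesQ))
      = (j.factorial : ℚ)⁻¹ • coeff n (Lq ^ j * onesQ) := by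
    intro j
    rw [smul_eq_mul, smul_eq_mul, ← mul_assoc]
    congr 1
    · rw [Nat.factorial_succ]
      push_cast
      rw [mul_inv]
      field_simp
  rw [Finset.sum_congr rfl fun j _ => step2 j]
  have step3 : ∀ j : ℕ, coeff n (Lq ^ j * onesQ) = ∑ p ∈ antidiagonal n, coeff p.1 (Lq ^ j) := by
    intro j
    rw [coeff_mul]
    exact Finset.sum_congr rfl fun p _ => by simp [onesQ]
  calc ∑ j ∈ range (n+1), (j.factorial : ℚ)⁻¹ • coeff n (Lq ^ j * onesQ)
      = ∑ j ∈ range (n+1), ∑ p ∈ antidiagonal n, (j.factorial : ℚ)⁻¹ • coeff p.1 (Lq ^ j) := by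
        refine Finset.sum_congr rfl fun j _ => ?_
        rw [step3, Finset.smul_sum]
    _ = ∑ p ∈ antidiagonal n, ∑ j ∈ range (n+1), (j.factorial : ℚ)⁻¹ • coeff p.1 (Lq ^ j) :=
        Finset.sum_comm
    _ = ∑ p ∈ antidiagonal n, coeff p.1 (expPS Lq) := by
        refine Finset.sum_congr rfl fun p hp => ?_
        rw [Finset.HasAntidiagonal.mem_antidiagonal] at hp
        rw [coeff_expPS_big constCoeff_Lq (show p.1 < n + 1 by omega)]

lemma expQ : expPS Lq = onesQ := by
  have key : ∀ n, coeff n (expPS Lq) = 1 := by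
    intro n
    induction n using Nat.strong_induction_on with
    | _ n ih =>
      match n with
      | 0 => rw [coeff_zero_expPS]
      | Nat.succ m =>
        have hrec := expQ_rec m
        have hsum : ∑ p ∈ antidiagonal m, coeff p.1 (expPS Lq) = (m : ℚ) + 1 := by
          have heach : ∑ p ∈ antidiagonal m, coeff p.1 (expPS Lq)
              = ∑ _p ∈ antidiagonal m, (1 : ℚ) :=
            Finset.sum_congr rfl (fun p hp => by
              rw [Finset.HasAntidiagonal.mem_antidiagonal] at hp
              exact ih p.1 (by omega))
          rw [heach, Finset.sum_const, Finset.Nat.card_antidiagonal, nsmul_eq_mul]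
          push_cast; ring
        rw [hsum] at hrec
        have hne : ((m:ℚ) + 1) ≠ 0 := by positivity
        have := mul_right_cancel₀ hne (hrec.trans (one_mul ((m:ℚ)+1)).symm)
        simpa using this
  ext n
  rw [key]
  simp [onesQ]

lemma onesQ_mul : onesQ * (1 - PowerSeries.X) = 1 := by
  ext n
  rw [coeff_mul]
  have hterm : ∀ p : ℕ × ℕ, coeff p.1 onesQ * coeff p.2 (1 - PowerSeries.X)
      = (if p.2 = 0 then 1 else 0) - (if p.2 = 1 then 1 else 0) := by
    intro p
    simp [onesQ, PowerSeries.coeff_one, PowerSeries.coeff_X]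
  rw [Finset.sum_congr rfl fun p _ => hterm p, Finset.sum_sub_distrib]
  match n with
  | 0 => simp [Finset.filter_singleton]
  | n + 1 =>
    have h1 : ∑ p ∈ antidiagonal (n+1), (if p.2 = 0 then (1:ℚ) else 0) = 1 := by
      rw [Finset.sum_eq_single ((n+1 : ℕ), (0:ℕ))]
      · simp
      · intro p hp hne
        rw [Finset.HasAntidiagonal.mem_antidiagonal] at hp
        rw [if_neg fun h0 => hne (Prod.ext (by omega) (by omega))]
      · intro h
        exact absurd (Finset.HasAntidiagonal.mem_antidiagonal.mpr (by omega)) h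
    have h2 : ∑ p ∈ antidiagonal (n+1), (if p.2 = 1 then (1:ℚ) else 0) = 1 := by
      rw [Finset.sum_eq_single ((n : ℕ), (1:ℕ))]
      · simp
      · intro p hp hne
        rw [Finset.HasAntidiagonal.mem_antidiagonal] at hp
        rw [if_neg fun h0 => hne (Prod.ext (by omega) (by omega))]
      · intro h
        exact absurd (Finset.HasAntidiagonal.mem_antidiagonal.mpr (by omega)) h
    rw [h1, h2, sub_self, PowerSeries.coeff_one, if_neg (by omega)]

lemma expQ_neg : expPS (-Lq) = 1 - PowerSeries.X := by
  have h1 : expPS (Lq + (-Lq)) = expPS (-Lq) * expPS Lq :=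
    expPS_add constCoeff_Lq (by simp [constCoeff_Lq]) (fun i j => Commute.all _ _)
  rw [add_neg_cancel, expPS_zero, expQ] at h1
  calc expPS (-Lq) = expPS (-Lq) * (onesQ * (1 - PowerSeries.X)) := by rw [onesQ_mul, mul_one]
    _ = (expPS (-Lq) * onesQ) * (1 - PowerSeries.X) := by rw [mul_assoc]
    _ = 1 - PowerSeries.X := by rw [← h1, one_mul]

end QComp

section Main
variable {R : Type*} [Ring R] [Algebra ℚ R]

lemma central_inv {γ γ' : R} (hγ : ∀ x : R, γ * x = x * γ)
    (hγγ' : γ * γ' = 1) (hγ'γ : γ' * γ = 1) : ∀ x : R, γ' * x = x * γ' := by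
  intro x
  calc γ' * x = γ' * x * (γ * γ') := by rw [hγγ', mul_one]
    _ = γ' * (x * γ) * γ' := by rw [← mul_assoc (γ' * x) γ γ', mul_assoc γ' x γ]
    _ = γ' * (γ * x) * γ' := by rw [hγ]
    _ = (γ' * γ) * x * γ' := by rw [← mul_assoc γ' γ x]
    _ = x * γ' := by rw [hγ'γ, one_mul]

lemma claim1 {A γ γ' t : R}
    (hγ'c : ∀ x : R, γ' * x = x * γ') (hγγ' : γ * γ' = 1)
    (H : ℕ → R) (hH0 : H 0 = 1)
    (hA : ∀ n : ℕ, A * (H n - γ' * (if n = 0 then 0 else H (n - 1))) =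
      (γ' ^ n * H n - t * (γ * γ' ^ n) * (if n = 0 then 0 else H (n - 1))) * A) :
    ∀ n : ℕ, A * H n
      = γ' ^ n * H n * A + (∑ m ∈ Finset.range n, (γ' - t) * γ' ^ (n - 1) * H m) * A := by
  intro n
  induction n with
  | zero =>
    simp [hH0]
  | succ n ihn =>
    have key := hA (n + 1)
    rw [if_neg (Nat.succ_ne_zero n), Nat.add_sub_cancel] at key
    have hg : γ * γ' ^ (n + 1) = γ' ^ n := by
      rw [pow_succ', ← mul_assoc, hγγ', one_mul]
    rw [hg, mul_sub] at key
    -- key : A * H (n+1) - A * (γ' * H n) = (γ'^(n+1) * H (n+1) - t * γ'^n * H n) * A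
    have hAH : A * H (n + 1)
        = (γ' ^ (n + 1) * H (n + 1) - t * γ' ^ n * H n) * A + γ' * (A * H n) := by
      have h1 : A * (γ' * H n) = γ' * (A * H n) := by
        rw [← mul_assoc, ← hγ'c A, mul_assoc]
      rw [← h1, ← key]
      ring_nf
      rw [sub_add_cancel]
    rw [hAH, ihn]
    have hD : γ' * ((∑ m ∈ Finset.range n, (γ' - t) * γ' ^ (n - 1) * H m) * A)
        = (∑ m ∈ Finset.range n, (γ' - t) * γ' ^ n * H m) * A := by
      rw [← mul_assoc, Finset.mul_sum]
      congr 1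
      refine Finset.sum_congr rfl fun m hm => ?_
      rw [Finset.mem_range] at hm
      have hn1 : n - 1 + 1 = n := by omega
      calc γ' * ((γ' - t) * γ' ^ (n - 1) * H m)
          = (γ' - t) * (γ' * γ' ^ (n - 1)) * H m := by
            rw [← mul_assoc, ← mul_assoc, hγ'c (γ' - t), mul_assoc (γ' - t) γ']
        _ = (γ' - t) * γ' ^ n * H m := by rw [← pow_succ', hn1]
    have hDsucc : (∑ m ∈ Finset.range (n + 1), (γ' - t) * γ' ^ (n + 1 - 1) * H m) * A
        = (γ' - t) * γ' ^ n * H n * A + (∑ m ∈ Finset.range n, (γ' - t) * γ' ^ n * H m) * A := by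
      rw [Nat.add_sub_cancel, Finset.sum_range_succ, add_mul, add_comm]
    rw [mul_add, hD, hDsucc]
    have hcollect : γ' * (γ' ^ n * H n * A) = γ' ^ (n + 1) * H n * A := by
      rw [← mul_assoc, ← mul_assoc, ← pow_succ']
    rw [hcollect]
    have : (γ' ^ (n + 1) * H (n + 1) - t * γ' ^ n * H n) * A
        = γ' ^ (n + 1) * H (n + 1) * A - t * γ' ^ n * H n * A := by rw [sub_mul]
    rw [this]
    have : (γ' - t) * γ' ^ n * H n * A = γ' ^ (n + 1) * H n * A - t * γ' ^ n * H n * A := by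
      rw [sub_mul, sub_mul, sub_mul, ← pow_succ']
    rw [this]
    abel

lemma resc_neg (c : R) (f : PowerSeries R) : resc c (-f) = - resc c f := by
  ext n; simp [coeff_resc]

lemma expPS_Ls {γ' t : R} (hγ'c : ∀ x : R, γ' * x = x * γ') (htc : ∀ x : R, t * x = x * t) :
    expPS (PowerSeries.mk fun n => if n = 0 then 0 else (n : ℚ)⁻¹ • (γ' ^ n - t ^ n))
      = resc t (PowerSeries.map (algebraMap ℚ R) (1 - PowerSeries.X))
          * resc γ' (PowerSeries.map (algebraMap ℚ R) onesQ) := by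
  have hγ'cc : ∀ x : R, Commute γ' x := fun x => hγ'c x
  have htcc : ∀ x : R, Commute t x := fun x => htc x
  set φ := algebraMap ℚ R with hφ
  have hLsplit : (PowerSeries.mk fun n => if n = 0 then 0 else (n : ℚ)⁻¹ • (γ' ^ n - t ^ n))
      = resc γ' (PowerSeries.map φ Lq) + -(resc t (PowerSeries.map φ Lq)) := by
    ext n
    simp only [coeff_mk, map_add, map_neg, coeff_resc, PowerSeries.coeff_map, Lq, coeff_mk]
    split
    · simp
    · rw [hφ, Algebra.algebraMap_eq_smul_one, mul_smul_comm, mul_smul_comm, mul_one, mul_one,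
        ← smul_neg, ← smul_add, ← sub_eq_add_neg]
  rw [hLsplit]
  have hconst : ∀ c : R, constantCoeff (resc c (PowerSeries.map φ Lq)) = 0 := by
    intro c
    rw [← coeff_zero_eq_constantCoeff, coeff_resc, PowerSeries.coeff_map]
    have : coeff 0 Lq = 0 := by simp [Lq]
    rw [this]
    simp
  have hcen : ∀ (c : R), (∀ x : R, Commute c x) → ∀ (i : ℕ) (x : R),
      Commute (coeff i (resc c (PowerSeries.map φ Lq))) x := by
    intro c hc i x
    rw [coeff_resc, PowerSeries.coeff_map, hφ]
    exact Commute.mul_left ((hc x).pow_left i) (Algebra.commutes (coeff i Lq) x)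
  have h1 : expPS (resc γ' (PowerSeries.map φ Lq) + -(resc t (PowerSeries.map φ Lq)))
      = expPS (-(resc t (PowerSeries.map φ Lq))) * expPS (resc γ' (PowerSeries.map φ Lq)) := by
    refine expPS_add (hconst γ') (by rw [map_neg, hconst t, neg_zero]) fun i j => ?_
    rw [map_neg]
    exact (Commute.neg_left (hcen t htcc i _))
  rw [h1]
  have h2 : expPS (-(resc t (PowerSeries.map φ Lq)))
      = resc t (PowerSeries.map φ (1 - PowerSeries.X)) := by
    rw [← resc_neg, ← map_neg (PowerSeries.map φ) Lq, ← resc_expPS htcc, ← expPS_map, expQ_neg]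
  have h3 : expPS (resc γ' (PowerSeries.map φ Lq))
      = resc γ' (PowerSeries.map φ onesQ) := by
    rw [← resc_expPS hγ'cc, ← expPS_map, expQ]
  rw [h2, h3]

lemma coeff_G {γ' t : R} (n : ℕ) :
    coeff n (resc t (PowerSeries.map (algebraMap ℚ R) (1 - PowerSeries.X))
      * resc γ' (PowerSeries.map (algebraMap ℚ R) onesQ))
      = if n = 0 then 1 else (γ' - t) * γ' ^ (n - 1) := by
  set φ := algebraMap ℚ R
  have hG1 : ∀ m : ℕ, coeff m (resc t (PowerSeries.map φ (1 - PowerSeries.X)))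
      = if m = 0 then 1 else if m = 1 then -t else 0 := by
    intro m
    rw [coeff_resc, PowerSeries.coeff_map, map_sub, PowerSeries.coeff_one, PowerSeries.coeff_X]
    match m with
    | 0 => simp
    | 1 => simp
    | (m+2) => simp
  have hG2 : ∀ m : ℕ, coeff m (resc γ' (PowerSeries.map φ onesQ)) = γ' ^ m := by
    intro m
    rw [coeff_resc, PowerSeries.coeff_map]
    simp [onesQ]
  rw [coeff_mul]
  match n with
  | 0 =>
    rw [Finset.Nat.antidiagonal_zero, Finset.sum_singleton, hG1, hG2]
    simp
  | n + 1 =>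
    rw [Finset.Nat.sum_antidiagonal_succ, hG1 0, hG2 (n+1), if_pos rfl, one_mul]
    have hrest : ∑ p ∈ antidiagonal n,
        coeff (p.1 + 1) (resc t (PowerSeries.map φ (1 - PowerSeries.X)))
          * coeff p.2 (resc γ' (PowerSeries.map φ onesQ))
        = - (t * γ' ^ n) := by
      rw [Finset.sum_eq_single ((0:ℕ), n)]
      · rw [hG1, hG2]
        simp
      · intro p hp hne
        rw [Finset.HasAntidiagonal.mem_antidiagonal] at hp
        rw [hG1]
        rw [if_neg (by omega), if_neg (fun h => hne (Prod.ext (by omega) (by omega))), zero_mul]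
      · intro h
        exact absurd (Finset.HasAntidiagonal.mem_antidiagonal.mpr (by omega)) h
    rw [hrest, if_neg (Nat.succ_ne_zero n), Nat.add_sub_cancel]
    rw [show (γ' - t) * γ' ^ n = γ' ^ (n+1) + -(t * γ' ^ n) by
      rw [sub_mul, ← pow_succ', sub_eq_add_neg]]
  
lemma claim2 {γ' t : R} (H : ℕ → R) (n : ℕ) :
    coeff n ((resc t (PowerSeries.map (algebraMap ℚ R) (1 - PowerSeries.X))
      * resc γ' (PowerSeries.map (algebraMap ℚ R) onesQ)) * resc γ' (PowerSeries.mk H))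
      = γ' ^ n * H n + (∑ m ∈ Finset.range n, (γ' - t) * γ' ^ (n - 1) * H m) := by
  rw [coeff_mul]
  match n with
  | 0 =>
    rw [Finset.Nat.antidiagonal_zero, Finset.sum_singleton, coeff_G, coeff_resc]
    simp
  | n + 1 =>
    rw [Finset.Nat.sum_antidiagonal_succ, coeff_G, if_pos rfl, one_mul, coeff_resc, coeff_mk]
    congr 1
    have hterm : ∀ p ∈ antidiagonal n,
        coeff (p.1 + 1) (resc t (PowerSeries.map (algebraMap ℚ R) (1 - PowerSeries.X))
          * resc γ' (PowerSeries.map (algebraMap ℚ R) onesQ))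
          * coeff p.2 (resc γ' (PowerSeries.mk H))
        = (γ' - t) * γ' ^ n * H p.2 := by
      intro p hp
      rw [Finset.HasAntidiagonal.mem_antidiagonal] at hp
      rw [coeff_G, if_neg (Nat.succ_ne_zero p.1), Nat.add_sub_cancel, coeff_resc, coeff_mk,
        mul_assoc, ← mul_assoc (γ' ^ p.1), ← pow_add, hp, ← mul_assoc]
    rw [Finset.sum_congr rfl hterm, ← Finset.Nat.sum_antidiagonal_swap,
      Finset.Nat.sum_antidiagonal_eq_sum_range_succ_mk]
    simp

lemma pushk {A : R} {Xs Zs : PowerSeries R} (hXs0 : constantCoeff Xs = 0)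
    (hZs0 : constantCoeff Zs = 0) {n : ℕ}
    (IH : ∀ m, m < n → A * coeff m Xs = coeff m Zs * A) :
    ∀ k b, b ≤ n → (b < n ∨ 2 ≤ k) → A * coeff b (Xs ^ k) = coeff b (Zs ^ k) * A := by
  intro k
  induction k with
  | zero =>
    intro b _ _
    rw [pow_zero, pow_zero, coeff_one]
    split <;> simp
  | succ k ihk =>
    intro b hb hcase
    rw [pow_succ', pow_succ', coeff_mul, coeff_mul, Finset.mul_sum, Finset.sum_mul]
    refine Finset.sum_congr rfl fun p hp => ?_
    rw [Finset.HasAntidiagonal.mem_antidiagonal] at hp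
    rcases Nat.eq_zero_or_pos p.1 with h1 | h1
    · have hx : coeff p.1 Xs = 0 := by
        rw [h1, coeff_zero_eq_constantCoeff, hXs0]
      have hz : coeff p.1 Zs = 0 := by
        rw [h1, coeff_zero_eq_constantCoeff, hZs0]
      rw [hx, hz, zero_mul, zero_mul, mul_zero, zero_mul]
    rcases Nat.eq_zero_or_pos k with rfl | hk
    · -- k = 0 : coeff p.2 (Xs^0) = if p.2 = 0
      rw [pow_zero, pow_zero, coeff_one]
      have hbn : b < n := by
        rcases hcase with h | h
        · exact h
        · omega
      split
      · next h0 =>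
        have hpb : p.1 = b := by omega
        rw [mul_one, mul_one, hpb]
        exact IH b hbn
      · simp
    · -- k ≥ 1
      rcases Nat.lt_or_ge p.1 n with hlt | hge
      · have h2 : p.2 < n := by omega
        calc A * (coeff p.1 Xs * coeff p.2 (Xs ^ k))
            = (A * coeff p.1 Xs) * coeff p.2 (Xs ^ k) := by rw [mul_assoc]
          _ = coeff p.1 Zs * (A * coeff p.2 (Xs ^ k)) := by rw [IH p.1 hlt, mul_assoc]
          _ = coeff p.1 Zs * (coeff p.2 (Zs ^ k) * A) := by
              rw [ihk p.2 (by omega) (Or.inl h2)]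
          _ = coeff p.1 Zs * coeff p.2 (Zs ^ k) * A := by rw [mul_assoc]
      · -- p.1 = n = b, p.2 = 0, and coeff 0 (Xs^k) = 0 since k ≥ 1
        have hp2 : p.2 = 0 := by omega
        have hxz : coeff p.2 (Xs ^ k) = 0 := by
          rw [hp2]; exact coeff_pow_eq_zero hXs0 k 0 hk
        have hzz : coeff p.2 (Zs ^ k) = 0 := by
          rw [hp2]; exact coeff_pow_eq_zero hZs0 k 0 hk
        rw [hxz, hzz, mul_zero, mul_zero, mul_zero, zero_mul]

end Main

end Stmt9

open PowerSeries Finset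

/-- Let `R` be an associative unital `ℚ`-algebra, `A ∈ R`, `γ ∈ R` a
central unit (with two-sided inverse `γ'`, so `γ⁻¹ = γ'` and `γ^{-n} = γ'^n`,
`γ^{-n+1} = γ * γ'^n`), `t ∈ R` central, and `(P_n)_{n ≥ 1}` a sequence in `R`.
Define `H_n` for `n ≥ 0` by `∑_{n ≥ 0} H_n z^n = exp(∑_{n ≥ 1} P_n z^n / n)`
(so `H_0 = 1`), and set `H_{-1} = 0`.  If
`A (H_n - γ⁻¹ H_{n-1}) = (γ^{-n} H_n - t γ^{-n+1} H_{n-1}) A` for all `n ≥ 0`, then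
`A P_n - γ^{-n} P_n A = A (γ^{-n} - t^n)` for all `n ≥ 1`. -/
theorem stmt_9 {R : Type*} [Ring R] [Algebra ℚ R] (A γ γ' t : R)
    (hγ : ∀ x : R, γ * x = x * γ) (ht : ∀ x : R, t * x = x * t)
    (hγγ' : γ * γ' = 1) (hγ'γ : γ' * γ = 1) (P H : ℕ → R)
    (hH : (PowerSeries.mk H : PowerSeries R) =
      expPS (PowerSeries.mk fun n => if n = 0 then 0 else (n : ℚ)⁻¹ • P n))
    (hA : ∀ n : ℕ, A * (H n - γ' * (if n = 0 then 0 else H (n - 1))) =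
      (γ' ^ n * H n - t * (γ * γ' ^ n) * (if n = 0 then 0 else H (n - 1))) * A) :
    ∀ n : ℕ, 1 ≤ n → A * P n - γ' ^ n * (P n * A) = A * (γ' ^ n - t ^ n) := by
  classical
  have hγ'c : ∀ x : R, γ' * x = x * γ' := Stmt9.central_inv hγ hγγ' hγ'γ
  have hγ'cc : ∀ x : R, Commute γ' x := fun x => hγ'c x
  have htcc : ∀ x : R, Commute t x := fun x => ht x
  set φ := algebraMap ℚ R with hφ
  set Xs : PowerSeries R := PowerSeries.mk fun n => if n = 0 then 0 else (n : ℚ)⁻¹ • P n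
    with hXs
  have hXs0 : constantCoeff Xs = 0 := by
    rw [← coeff_zero_eq_constantCoeff, hXs, coeff_mk, if_pos rfl]
  set Ls : PowerSeries R :=
    PowerSeries.mk fun n => if n = 0 then 0 else (n : ℚ)⁻¹ • (γ' ^ n - t ^ n) with hLs
  set Zs : PowerSeries R := Stmt9.resc γ' Xs + Ls with hZs
  have hLscoeff : ∀ i, coeff i Ls = if i = 0 then 0 else (i : ℚ)⁻¹ • (γ' ^ i - t ^ i) := by
    intro i; rw [hLs, coeff_mk]
  have hLscen : ∀ (i : ℕ) (x : R), Commute (coeff i Ls) x := by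
    intro i x
    rw [hLscoeff]
    split
    · exact Commute.zero_left x
    · exact (((hγ'cc x).pow_left i).sub_left ((htcc x).pow_left i)).smul_left _
  have hZscoeff : ∀ i, coeff i Zs = γ' ^ i * coeff i Xs + coeff i Ls := by
    intro i; rw [hZs, map_add, Stmt9.coeff_resc]
  have hZs0 : constantCoeff Zs = 0 := by
    rw [← coeff_zero_eq_constantCoeff, hZscoeff, hLscoeff, if_pos rfl, add_zero,
      coeff_zero_eq_constantCoeff, hXs0, mul_zero]
  have hH0 : H 0 = 1 := by
    have h := congrArg (coeff 0) hH
    rwa [coeff_mk, Stmt9.coeff_zero_expPS] at h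
  have hc1 := Stmt9.claim1 hγ'c hγγ' H hH0 hA
  have hZexp : expPS Zs = (Stmt9.resc t (PowerSeries.map φ (1 - PowerSeries.X))
      * Stmt9.resc γ' (PowerSeries.map φ Stmt9.onesQ)) * Stmt9.resc γ' (PowerSeries.mk H) := by
    have hadd : expPS Zs = expPS Ls * expPS (Stmt9.resc γ' Xs) := by
      refine Stmt9.expPS_add ?_ ?_ ?_
      · rw [← coeff_zero_eq_constantCoeff, Stmt9.coeff_resc, pow_zero, one_mul,
          coeff_zero_eq_constantCoeff, hXs0]
      · rw [← coeff_zero_eq_constantCoeff, hLscoeff, if_pos rfl]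
      · exact fun i j => hLscen i _
    rw [hadd, ← Stmt9.resc_expPS hγ'cc, ← hH, hLs, hφ, Stmt9.expPS_Ls hγ'c ht]
  have hc2 : ∀ n, coeff n (expPS Zs)
      = γ' ^ n * H n + (∑ m ∈ Finset.range n, (γ' - t) * γ' ^ (n - 1) * H m) := by
    intro n; rw [hZexp]; exact Stmt9.claim2 H n
  have main : ∀ n, A * coeff n Xs = coeff n Zs * A := by
    intro n
    induction n using Nat.strong_induction_on with
    | _ n IH =>
      rcases Nat.eq_zero_or_pos n with rfl | hn
      · simp [coeff_zero_eq_constantCoeff, hXs0, hZs0]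
      · have hAH : A * coeff n (expPS Xs) = coeff n (expPS Zs) * A := by
          rw [← hH, coeff_mk, hc1 n, hc2 n, add_mul]
        rw [Stmt9.coeff_expPS, Stmt9.coeff_expPS] at hAH
        have hAH' : ∑ k ∈ range (n+1), (k.factorial : ℚ)⁻¹ • (A * coeff n (Xs ^ k))
            = ∑ k ∈ range (n+1), (k.factorial : ℚ)⁻¹ • (coeff n (Zs ^ k) * A) := by
          calc ∑ k ∈ range (n+1), (k.factorial : ℚ)⁻¹ • (A * coeff n (Xs ^ k))
              = A * ∑ k ∈ range (n+1), (k.factorial : ℚ)⁻¹ • coeff n (Xs ^ k) := by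
                rw [Finset.mul_sum]
                exact Finset.sum_congr rfl fun k _ => (mul_smul_comm _ _ _).symm
            _ = (∑ k ∈ range (n+1), (k.factorial : ℚ)⁻¹ • coeff n (Zs ^ k)) * A := hAH
            _ = ∑ k ∈ range (n+1), (k.factorial : ℚ)⁻¹ • (coeff n (Zs ^ k) * A) := by
                rw [Finset.sum_mul]
                exact Finset.sum_congr rfl fun k _ => smul_mul_assoc _ _ _
        have hdiff : ∑ k ∈ range (n+1), ((k.factorial : ℚ)⁻¹ • (A * coeff n (Xs ^ k))
            - (k.factorial : ℚ)⁻¹ • (coeff n (Zs ^ k) * A)) = 0 := by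
          rw [Finset.sum_sub_distrib, hAH', sub_self]
        have hpush := Stmt9.pushk hXs0 hZs0 (fun m hm => IH m hm)
        have hone : (Nat.factorial 1 : ℚ)⁻¹ • (A * coeff n (Xs ^ 1))
            - (Nat.factorial 1 : ℚ)⁻¹ • (coeff n (Zs ^ 1) * A) = 0 := by
          have hsingle := Finset.sum_eq_single_of_mem (s := range (n+1))
            (f := fun k => (k.factorial : ℚ)⁻¹ • (A * coeff n (Xs ^ k))
              - (k.factorial : ℚ)⁻¹ • (coeff n (Zs ^ k) * A))
            1 (Finset.mem_range.mpr (by omega)) ?_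
          · exact hsingle.symm.trans hdiff
          · intro k hk hne
            match k with
            | 0 =>
              simp only [pow_zero, coeff_one, if_neg (show ¬n = 0 by omega)]
              simp
            | (m+1) =>
              have h2 : 2 ≤ m + 1 := by
                rcases Nat.eq_zero_or_pos m with rfl | hm
                · exact absurd rfl hne
                · omega
              simp only [hpush (m+1) n le_rfl (Or.inr h2), sub_self]
        rw [pow_one, pow_one, Nat.factorial_one, Nat.cast_one, inv_one, one_smul, one_smul,
          sub_eq_zero] at hone
        exact hone
  intro n hn
  have hm := main n
  have hXn : coeff n Xs = (n : ℚ)⁻¹ • P n := by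
    rw [hXs, coeff_mk, if_neg (by omega)]
  have hq : ((n : ℚ)) ≠ 0 := Nat.cast_ne_zero.mpr (by omega)
  rw [hZscoeff, hLscoeff, if_neg (show ¬n = 0 by omega), hXn] at hm
  rw [mul_smul_comm ((n:ℚ)⁻¹) A (P n), mul_smul_comm ((n:ℚ)⁻¹) (γ' ^ n) (P n),
    ← smul_add, smul_mul_assoc] at hm
  have hm2 := congrArg (fun x : R => (n : ℚ) • x) hm
  rw [smul_smul, smul_smul, mul_inv_cancel₀ hq, one_smul, one_smul] at hm2
  have hcom : (γ' ^ n - t ^ n) * A = A * (γ' ^ n - t ^ n) :=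
    (((hγ'cc A).pow_left n).sub_left ((htcc A).pow_left n)).eq
  rw [add_mul, hcom, mul_assoc] at hm2
  rw [hm2, add_sub_cancel_left]
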